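/- Let p be a prime, let a_1,…,a_N ∈ ℤ^n be pairwise distinct, and let f(x) = Σ_{r=1}^N v_r x^{a_r} be the Laurent polynomial in x_1,…,x_n with coefficients in the polynomial ring ℤ[v_1,…,v_N]. For i, j ∈ {1,…,N} define (γ_p)_{j,i} = Σ_{k=1}^p (−1)^{k+1} C(p,k) v_i^{p−k} · (coefficient of x^{k a_i − a_j} in f(x)^{k−1}) ∈ ℤ[v_1,…,v_N] (with f^0 = 1). Then for every nonempty subset J ⊆ {1,…,N}, the coefficient of the monomial ∏_{j∈J} v_j^{p−1} in the determinant of the J×J matrix ((γ_p)_{j,i})_{j,i∈J} equals 1. In particular this determinant, and hence the determinant of the Hasse–Witt matrix it is congruent to modulo p, is not divisible by p. -/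

import Mathlib

noncomputable section

/-- The generic Laurent polynomial `f(x) = Σ_{r=1}^N v_r x^{a_r}` with coefficients in the
polynomial ring `ℤ[v_1,…,v_N]`. -/
def genericF (n N : ℕ) (a : Fin N → (Fin n → ℤ)) :
    AddMonoidAlgebra (MvPolynomial (Fin N) ℤ) (Fin n → ℤ) :=
  ∑ r : Fin N, AddMonoidAlgebra.single (a r) (MvPolynomial.X r)

/-- The entry `(γ_p)_{j,i} = Σ_{k=1}^p (−1)^{k+1} C(p,k) v_i^{p−k}·(coefficient of
`x^{k a_i − a_j}` in `f^{k−1}`) ∈ ℤ[v_1,…,v_N]`. -/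
def gammaPEntry (n N p : ℕ) (a : Fin N → (Fin n → ℤ)) (j i : Fin N) :
    MvPolynomial (Fin N) ℤ :=
  ∑ k ∈ Finset.Icc 1 p,
    (-1 : MvPolynomial (Fin N) ℤ) ^ (k + 1) * (Nat.choose p k : MvPolynomial (Fin N) ℤ) *
      (MvPolynomial.X i) ^ (p - k) * ((genericF n N a) ^ (k - 1)).coeff ((k : ℤ) • a i - a j)

namespace GammaAux

open Finset MvPolynomial

noncomputable local instance (priority := 2000) lexLOG (n : ℕ) :
    IsOrderedCancelAddMonoid (Lex (Fin n → ℤ)) :=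
  inferInstance

noncomputable local instance (priority := 2001) lexLO (n : ℕ) :
    LinearOrder (Lex (Fin n → ℤ)) := inferInstance

variable {n N : ℕ}

/-- Restricted generic Laurent polynomial. -/
def fS (a : Fin N → (Fin n → ℤ)) (S : Finset (Fin N)) :
    AddMonoidAlgebra (MvPolynomial (Fin N) ℤ) (Fin n → ℤ) :=
  ∑ r ∈ S, AddMonoidAlgebra.single (a r) (MvPolynomial.X r)

/-- The variable-killing algebra map. -/
def phi (N : ℕ) (T : Finset (Fin N)) :
    MvPolynomial (Fin N) ℤ →ₐ[ℤ] MvPolynomial (Fin N) ℤ :=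
  aeval (fun r => if r ∈ T then X r else 0)

lemma toLex_add' (x y : Fin n → ℤ) : toLex (x + y) = toLex x + toLex y := rfl

lemma toLex_nsmul' (m : ℕ) (x : Fin n → ℤ) : toLex (m • x) = m • toLex x := rfl

lemma fS_apply (a : Fin N → (Fin n → ℤ)) (S : Finset (Fin N)) (y : Fin n → ℤ) :
    (fS a S).coeff y = ∑ r ∈ S, if a r = y then X r else 0 := by
  classical
  rw [fS, AddMonoidAlgebra.coeff_sum, Finsupp.finset_sum_apply]
  exact Finset.sum_congr rfl fun r _ => Finsupp.single_apply

lemma fS_apply_self {a : Fin N → (Fin n → ℤ)} (ha : Function.Injective a)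
    {S : Finset (Fin N)} {i0 : Fin N} (hi0 : i0 ∈ S) :
    (fS a S).coeff (a i0) = X i0 := by
  classical
  rw [fS_apply]
  rw [Finset.sum_eq_single i0]
  · rw [if_pos rfl]
  · intro r _ hr
    rw [if_neg fun h => hr (ha h)]
  · intro h; exact absurd hi0 h

lemma support_fS {a : Fin N → (Fin n → ℤ)} {S : Finset (Fin N)} {γ : Fin n → ℤ}
    (hγ : γ ∈ (fS a S).coeff.support) : ∃ r ∈ S, γ = a r := by
  classical
  rw [fS, AddMonoidAlgebra.coeff_sum] at hγ
  have h := Finsupp.support_finset_sum (s := S)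
    (f := fun r => (AddMonoidAlgebra.single (a r) (X r : MvPolynomial (Fin N) ℤ)).coeff) hγ
  rcases Finset.mem_biUnion.1 h with ⟨r, hr, hm⟩
  exact ⟨r, hr, Finset.mem_singleton.1 (Finsupp.support_single_subset hm)⟩

section minLemmas

variable {a : Fin N → (Fin n → ℤ)} {S : Finset (Fin N)} {i0 : Fin N}

/-- All exponents in the support of `fS^m` are lexicographically at least `m • a i0`. -/
lemma support_pow_le (hmin : ∀ r ∈ S, toLex (a i0) ≤ toLex (a r)) :
    ∀ (m : ℕ) (γ : Fin n → ℤ), γ ∈ ((fS a S) ^ m).coeff.support →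
      m • toLex (a i0) ≤ toLex γ := by
  classical
  intro m
  induction m with
  | zero =>
    intro γ hγ
    rw [pow_zero] at hγ
    have : γ ∈ (AddMonoidAlgebra.single (0 : Fin n → ℤ)
        (1 : MvPolynomial (Fin N) ℤ)).coeff.support := by
      rwa [← AddMonoidAlgebra.one_def]
    have h0 : γ = 0 := Finset.mem_singleton.1 (Finsupp.support_single_subset this)
    subst h0
    simp
  | succ m ih =>
    intro γ hγ
    rw [pow_succ] at hγ
    have h := AddMonoidAlgebra.support_coeff_mul_subset _ _ hγ
    rcases Finset.mem_add.1 h with ⟨γ₂, hγ₂, γ₁, hγ₁, rfl⟩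
    rcases support_fS hγ₁ with ⟨r, hr, rfl⟩
    have h1 := ih γ₂ hγ₂
    have h2 := hmin r hr
    calc (m + 1) • toLex (a i0) = m • toLex (a i0) + toLex (a i0) := succ_nsmul _ _
    _ ≤ toLex γ₂ + toLex (a r) := add_le_add h1 h2
    _ = toLex (γ₂ + a r) := rfl

/-- Exact head coefficient: `(fS^m) (m • a i0) = X i0 ^ m`. -/
lemma pow_apply_head (ha : Function.Injective a) (hi0 : i0 ∈ S)
    (hmin : ∀ r ∈ S, toLex (a i0) ≤ toLex (a r)) :
    ∀ m : ℕ, ((fS a S) ^ m).coeff (m • a i0) = X i0 ^ m := by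
  classical
  intro m
  induction m with
  | zero =>
    rw [pow_zero, pow_zero, zero_smul, AddMonoidAlgebra.one_def]
    exact Finsupp.single_eq_same
  | succ m ih =>
    rw [pow_succ, AddMonoidAlgebra.coeff_mul, Finsupp.sum]
    have hmain : ∀ b₁ ∈ ((fS a S) ^ m).coeff.support,
        (Finsupp.sum (fS a S).coeff fun a₂ b₂ =>
          if b₁ + a₂ = (m+1) • a i0 then ((fS a S)^m).coeff b₁ * b₂ else 0)
        = if b₁ = m • a i0 then X i0 ^ (m+1) else 0 := by
      intro b₁ hb₁
      by_cases hb : b₁ = m • a i0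
      · subst hb
        rw [if_pos rfl, Finsupp.sum]
        rw [Finset.sum_eq_single (a i0)]
        · have hcond : m • a i0 + a i0 = (m+1) • a i0 := (succ_nsmul _ _).symm
          rw [if_pos hcond, ih, fS_apply_self ha hi0, ← pow_succ]
        · intro γ₁ hγ₁ hne
          rcases support_fS hγ₁ with ⟨r, hr, rfl⟩
          rw [if_neg]
          intro hcond
          apply hne
          have : a r = (m+1) • a i0 - m • a i0 := by
            rw [← hcond]; abel
          rw [this, succ_nsmul]; abel
        · intro h
          rw [if_pos ((succ_nsmul _ _).symm : m • a i0 + a i0 = (m+1) • a i0)]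
          rw [Finsupp.notMem_support_iff.1 h, mul_zero]
      · rw [if_neg hb, Finsupp.sum]
        apply Finset.sum_eq_zero
        intro γ₁ hγ₁
        rcases support_fS hγ₁ with ⟨r, hr, rfl⟩
        rw [if_neg]
        intro hcond
        apply hb
        -- toLex argument: b₁ must equal m • a i0
        have h1 : m • toLex (a i0) ≤ toLex b₁ := support_pow_le hmin m b₁ hb₁
        have h2 : toLex (a i0) ≤ toLex (a r) := hmin r hr
        have hsum : toLex b₁ + toLex (a r) = (m+1) • toLex (a i0) := by
          rw [← toLex_add', hcond, toLex_nsmul']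
        have h3 : toLex b₁ ≤ m • toLex (a i0) := by
          have := add_le_add_right h2 (toLex b₁)
          rw [hsum] at this
          have h4 : (m+1) • toLex (a i0) = m • toLex (a i0) + toLex (a i0) :=
            succ_nsmul _ _
          rw [h4] at this
          exact le_of_add_le_add_right this
        have : toLex b₁ = m • toLex (a i0) := le_antisymm h3 h1
        have : toLex b₁ = toLex (m • a i0) := by rw [this, toLex_nsmul']
        exact toLex.injective this
    rw [Finset.sum_congr rfl hmain]
    by_cases hmem : m • a i0 ∈ ((fS a S) ^ m).coeff.support
    · rw [Finset.sum_ite_eq' _ _ _, if_pos hmem]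
    · exfalso
      apply hmem
      rw [Finsupp.mem_support_iff, ih]
      exact pow_ne_zero _ (X_ne_zero i0)

/-- Vanishing of off-diagonal coefficients in the extreme column. -/
lemma coeff_vanish (hmin : ∀ r ∈ S, toLex (a i0) ≤ toLex (a r))
    {j : Fin N} (hj : j ∈ S) (hji : j ≠ i0) (ha : Function.Injective a)
    {k : ℕ} (hk : 1 ≤ k) :
    ((fS a S) ^ (k-1)).coeff ((k : ℤ) • a i0 - a j) = 0 := by
  classical
  obtain ⟨m, rfl⟩ : ∃ m, k = m + 1 := ⟨k - 1, by omega⟩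
  by_contra hne
  have hγ : ((m+1 : ℕ) : ℤ) • a i0 - a j ∈ ((fS a S) ^ (m+1-1)).coeff.support :=
    Finsupp.mem_support_iff.2 hne
  have h1 := support_pow_le hmin (m+1-1) _ hγ
  simp only [Nat.add_sub_cancel] at h1 hγ
  -- rewrite the point
  have hpt : ((m+1 : ℕ) : ℤ) • a i0 - a j = m • a i0 + (a i0 - a j) := by
    push_cast
    rw [add_zsmul, one_zsmul, natCast_zsmul]
    abel
  rw [hpt] at h1
  have h2 : toLex (m • a i0 + (a i0 - a j))
      = m • toLex (a i0) + (toLex (a i0) - toLex (a j)) := rfl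
  rw [h2] at h1
  have h3 : toLex (a j) ≤ toLex (a i0) := by
    have := le_of_add_le_add_left (a := m • toLex (a i0))
      (by simpa using h1 : m • toLex (a i0) + (0:Lex (Fin n → ℤ)) ≤
        m • toLex (a i0) + (toLex (a i0) - toLex (a j)))
    rwa [sub_nonneg] at this
  have h4 : toLex (a i0) = toLex (a j) := le_antisymm (hmin j hj) h3
  exact hji (ha (toLex.injective h4.symm))

end minLemmas

section pointwise

variable {R₁ : Type*} [CommSemiring R₁] {R₂ : Type*} [CommSemiring R₂]
variable {G : Type*} [AddMonoid G]

lemma pw_mul [DecidableEq G] (ψ : R₁ →+* R₂) (P Q : AddMonoidAlgebra R₁ G)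
    (P' Q' : AddMonoidAlgebra R₂ G)
    (hP : ∀ y, ψ (P.coeff y) = P'.coeff y) (hQ : ∀ y, ψ (Q.coeff y) = Q'.coeff y) (x : G) :
    ψ ((P * Q).coeff x) = (P' * Q').coeff x := by
  classical
  rw [AddMonoidAlgebra.coeff_mul, AddMonoidAlgebra.coeff_mul, Finsupp.sum, Finsupp.sum]
  rw [map_sum]
  have hsubP : P'.coeff.support ⊆ P.coeff.support := by
    intro y hy
    rw [Finsupp.mem_support_iff] at hy ⊢
    intro h0
    exact hy (by rw [← hP, h0, map_zero])
  have hsubQ : Q'.coeff.support ⊆ Q.coeff.support := by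
    intro y hy
    rw [Finsupp.mem_support_iff] at hy ⊢
    intro h0
    exact hy (by rw [← hQ, h0, map_zero])
  have step : ∀ a₁,
      ψ (Finsupp.sum Q.coeff fun a₂ b₂ => if a₁ + a₂ = x then P.coeff a₁ * b₂ else 0)
      = ∑ a₂ ∈ Q.coeff.support, if a₁ + a₂ = x then P'.coeff a₁ * Q'.coeff a₂ else 0 := by
    intro a₁
    rw [Finsupp.sum, map_sum]
    refine Finset.sum_congr rfl fun a₂ _ => ?_
    rw [apply_ite ψ, map_zero, map_mul, hP, hQ]
  calc ∑ a₁ ∈ P.coeff.support, ψ (Finsupp.sum Q.coeff fun a₂ b₂ => if a₁ + a₂ = x then P.coeff a₁ * b₂ else 0)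
      = ∑ a₁ ∈ P.coeff.support, ∑ a₂ ∈ Q.coeff.support,
          if a₁ + a₂ = x then P'.coeff a₁ * Q'.coeff a₂ else 0 :=
        Finset.sum_congr rfl fun a₁ _ => step a₁
    _ = ∑ a₁ ∈ P'.coeff.support, ∑ a₂ ∈ Q.coeff.support,
          if a₁ + a₂ = x then P'.coeff a₁ * Q'.coeff a₂ else 0 := by
        refine (Finset.sum_subset hsubP fun a₁ _ h => ?_).symm
        refine Finset.sum_eq_zero fun a₂ _ => ?_
        rw [Finsupp.notMem_support_iff.1 h, zero_mul]
        simp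
    _ = ∑ a₁ ∈ P'.coeff.support, ∑ a₂ ∈ Q'.coeff.support,
          if a₁ + a₂ = x then P'.coeff a₁ * Q'.coeff a₂ else 0 := by
        refine Finset.sum_congr rfl fun a₁ _ => ?_
        refine (Finset.sum_subset hsubQ fun a₂ _ h => ?_).symm
        rw [Finsupp.notMem_support_iff.1 h, mul_zero]
        simp
    _ = _ := Finset.sum_congr rfl fun a₁ _ => rfl

lemma pw_pow [DecidableEq G] (ψ : R₁ →+* R₂) (P : AddMonoidAlgebra R₁ G)
    (P' : AddMonoidAlgebra R₂ G) (hP : ∀ y, ψ (P.coeff y) = P'.coeff y) :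
    ∀ (m : ℕ) (x : G), ψ ((P ^ m).coeff x) = (P' ^ m).coeff x := by
  intro m
  induction m with
  | zero =>
    intro x
    rw [pow_zero, pow_zero, AddMonoidAlgebra.one_def, AddMonoidAlgebra.one_def]
    classical
    rw [AddMonoidAlgebra.coeff_single, AddMonoidAlgebra.coeff_single, Finsupp.single_apply,
      Finsupp.single_apply, apply_ite ψ, map_one, map_zero]
  | succ m ih =>
    intro x
    rw [pow_succ, pow_succ]
    exact pw_mul ψ _ P _ P' ih hP x

end pointwise

lemma phi_X {T : Finset (Fin N)} {r : Fin N} :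
    phi N T (X r) = if r ∈ T then X r else 0 := by
  rw [phi, aeval_X]

lemma phi_genericF (a : Fin N → (Fin n → ℤ)) (T : Finset (Fin N)) (y : Fin n → ℤ) :
    phi N T ((genericF n N a).coeff y) = (fS a T).coeff y := by
  classical
  have h1 : (genericF n N a).coeff y = ∑ r : Fin N, if a r = y then X r else 0 := by
    rw [genericF, AddMonoidAlgebra.coeff_sum, Finsupp.finset_sum_apply]
    exact Finset.sum_congr rfl fun r _ => Finsupp.single_apply
  rw [h1, map_sum, fS_apply]
  rw [← Finset.sum_filter_add_sum_filter_not Finset.univ (· ∈ T)]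
  have h2 : ∑ r ∈ Finset.univ.filter (· ∉ T), phi N T (if a r = y then X r else 0) = 0 := by
    refine Finset.sum_eq_zero fun r hr => ?_
    have hrT : r ∉ T := (Finset.mem_filter.1 hr).2
    rw [apply_ite (phi N T), map_zero, phi_X, if_neg hrT, ite_self]
  rw [h2, add_zero]
  have h3 : Finset.univ.filter (· ∈ T) = T := by
    ext r; simp
  rw [h3]
  refine Finset.sum_congr rfl fun r hr => ?_
  rw [apply_ite (phi N T), map_zero, phi_X, if_pos hr]

lemma phi_entry (p : ℕ) (a : Fin N → (Fin n → ℤ)) (T : Finset (Fin N))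
    {i : Fin N} (hi : i ∈ T) (j : Fin N) :
    phi N T (gammaPEntry n N p a j i) =
      ∑ k ∈ Finset.Icc 1 p,
        (-1 : MvPolynomial (Fin N) ℤ) ^ (k + 1) * (Nat.choose p k : MvPolynomial (Fin N) ℤ) *
          (X i) ^ (p - k) * ((fS a T) ^ (k - 1)).coeff ((k : ℤ) • a i - a j) := by
  classical
  rw [gammaPEntry, map_sum]
  refine Finset.sum_congr rfl fun k _ => ?_
  rw [map_mul, map_mul, map_mul, map_pow, map_pow, map_neg, map_one, map_natCast, phi_X,
    if_pos hi]
  congr 1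
  exact pw_pow (phi N T).toRingHom _ _ (phi_genericF a T) (k-1) _

lemma alt_sum (p : ℕ) (hp : 1 ≤ p) :
    ∑ k ∈ Finset.Icc 1 p, (-1 : ℤ) ^ (k + 1) * (Nat.choose p k : ℤ) = 1 := by
  have h := Int.alternating_sum_range_choose (n := p)
  rw [if_neg (by omega)] at h
  rw [Finset.range_eq_Ico, Finset.sum_eq_sum_Ico_succ_bot (by omega)] at h
  rw [Finset.Ico_add_one_right_eq_Icc] at h
  simp only [pow_zero, one_mul, Nat.choose_zero_right, Nat.cast_one] at h
  have h2 : ∑ k ∈ Finset.Icc 1 p, (-1 : ℤ) ^ (k + 1) * (Nat.choose p k : ℤ)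
      = - ∑ k ∈ Finset.Icc 1 p, (-1 : ℤ) ^ k * (Nat.choose p k : ℤ) := by
    rw [← Finset.sum_neg_distrib]
    refine Finset.sum_congr rfl fun k _ => ?_
    rw [pow_succ]
    ring
  simp only [zero_add] at h
  rw [h2]
  linarith

/-- The crucial column computation: at a lex-minimal index the `φ_S`-reduced column
of the γ-matrix is `v_{i0}^{p-1} e_{i0}`. -/
lemma column_lemma (p : ℕ) (hp : 1 ≤ p) {a : Fin N → (Fin n → ℤ)}
    (ha : Function.Injective a) {S : Finset (Fin N)} {i0 : Fin N} (hi0 : i0 ∈ S)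
    (hmin : ∀ r ∈ S, toLex (a i0) ≤ toLex (a r)) {j : Fin N} (hj : j ∈ S) :
    phi N S (gammaPEntry n N p a j i0) =
      if j = i0 then (X i0 : MvPolynomial (Fin N) ℤ) ^ (p - 1) else 0 := by
  classical
  rw [phi_entry p a S hi0 j]
  by_cases hji : j = i0
  · subst hji
    rw [if_pos rfl]
    have hterm : ∀ k ∈ Finset.Icc 1 p,
        (-1 : MvPolynomial (Fin N) ℤ) ^ (k + 1) * (Nat.choose p k : MvPolynomial (Fin N) ℤ) *
          (X j) ^ (p - k) * ((fS a S) ^ (k - 1)).coeff ((k : ℤ) • a j - a j)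
        = (-1 : MvPolynomial (Fin N) ℤ) ^ (k + 1) * (Nat.choose p k : MvPolynomial (Fin N) ℤ) *
          (X j) ^ (p - 1) := by
      intro k hk
      rw [Finset.mem_Icc] at hk
      obtain ⟨m, rfl⟩ : ∃ m, k = m + 1 := ⟨k - 1, by omega⟩
      have hpt : ((m + 1 : ℕ) : ℤ) • a j - a j = m • a j := by
        push_cast
        rw [add_zsmul, one_zsmul, natCast_zsmul]
        abel
      rw [hpt]
      have := pow_apply_head ha hi0 hmin m
      rw [Nat.add_sub_cancel, this]
      rw [mul_assoc, ← pow_add]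
      congr 2
      omega
    rw [Finset.sum_congr rfl hterm]
    have : ∑ k ∈ Finset.Icc 1 p,
        (-1 : MvPolynomial (Fin N) ℤ) ^ (k + 1) * (Nat.choose p k : MvPolynomial (Fin N) ℤ) *
          (X j) ^ (p - 1)
        = (∑ k ∈ Finset.Icc 1 p,
            (-1 : MvPolynomial (Fin N) ℤ) ^ (k + 1) * (Nat.choose p k : MvPolynomial (Fin N) ℤ))
          * (X j) ^ (p - 1) := by
      rw [Finset.sum_mul]
    rw [this]
    have hcast : (∑ k ∈ Finset.Icc 1 p,
        (-1 : MvPolynomial (Fin N) ℤ) ^ (k + 1) * (Nat.choose p k : MvPolynomial (Fin N) ℤ))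
        = ((∑ k ∈ Finset.Icc 1 p, (-1 : ℤ) ^ (k + 1) * (Nat.choose p k : ℤ) :
            ℤ) : MvPolynomial (Fin N) ℤ) := by
      push_cast
      rfl
    rw [hcast, alt_sum p hp]
    simp
  · rw [if_neg hji]
    refine Finset.sum_eq_zero fun k hk => ?_
    rw [Finset.mem_Icc] at hk
    rw [coeff_vanish hmin hj hji ha hk.1, mul_zero]

/-- Determinant expansion along a column supported on the diagonal. -/
lemma det_column {α : Type*} [DecidableEq α] {R : Type*} [CommRing R]
    (S : Finset α) (i0 : α) (hi0 : i0 ∈ S) (M : Matrix {x // x ∈ S} {x // x ∈ S} R) (c : R)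
    (hcol : ∀ j : {x // x ∈ S}, M j ⟨i0, hi0⟩ = if j = ⟨i0, hi0⟩ then c else 0) :
    M.det = c * Matrix.det (Matrix.of fun j i : {x // x ∈ S.erase i0} =>
      M ⟨j.1, Finset.mem_of_mem_erase j.2⟩ ⟨i.1, Finset.mem_of_mem_erase i.2⟩) := by
  classical
  have hne : ∀ j : {x // x ∈ S.erase i0}, j.1 ≠ i0 := fun j => (Finset.mem_erase.1 j.2).1
  let ε : Unit ⊕ {x // x ∈ S.erase i0} ≃ {x // x ∈ S} :=
  { toFun := Sum.elim (fun _ => ⟨i0, hi0⟩) (fun j => ⟨j.1, Finset.mem_of_mem_erase j.2⟩)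
    invFun := fun s => if h : s.1 = i0 then Sum.inl ()
      else Sum.inr ⟨s.1, Finset.mem_erase.2 ⟨h, s.2⟩⟩
    left_inv := by
      rintro (u | j)
      · simp
      · simp [hne j]
    right_inv := by
      rintro ⟨s, hs⟩
      by_cases h : s = i0
      · subst h; simp
      · simp [h] }
  rw [← Matrix.det_submatrix_equiv_self ε M]
  have hblock : M.submatrix ε ε = Matrix.fromBlocks
      (Matrix.of fun _ _ : Unit => c)
      (Matrix.of fun _ i => M ⟨i0, hi0⟩ ⟨i.1, Finset.mem_of_mem_erase i.2⟩)
      0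
      (Matrix.of fun j i => M ⟨j.1, Finset.mem_of_mem_erase j.2⟩
        ⟨i.1, Finset.mem_of_mem_erase i.2⟩) := by
    ext x y
    cases x with
    | inl u =>
      cases y with
      | inl u' =>
        simp only [Matrix.submatrix_apply, Matrix.fromBlocks_apply₁₁, Matrix.of_apply]
        show M ⟨i0, hi0⟩ ⟨i0, hi0⟩ = c
        rw [hcol, if_pos rfl]
      | inr i => rfl
    | inr j =>
      cases y with
      | inl u' =>
        simp only [Matrix.submatrix_apply, Matrix.fromBlocks_apply₂₁, Matrix.of_apply]
        show M ⟨j.1, Finset.mem_of_mem_erase j.2⟩ ⟨i0, hi0⟩ = (0 : Matrix _ _ R) j u'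
        rw [hcol, if_neg (by simp [Subtype.ext_iff, hne j])]
        rfl
      | inr i => rfl
  rw [hblock, Matrix.det_fromBlocks_zero₂₁, Matrix.det_unique]
  rfl

/-- Coefficient extraction commutes with the variable-killing map for monomials
supported inside `T`. -/
lemma coeff_phi (T : Finset (Fin N)) (u : Fin N →₀ ℕ) (hu : ∀ r, r ∉ T → u r = 0)
    (P : MvPolynomial (Fin N) ℤ) :
    coeff u (phi N T P) = coeff u P := by
  classical
  conv_lhs => rw [← support_sum_monomial_coeff P]
  conv_rhs => rw [← support_sum_monomial_coeff P]
  rw [map_sum, coeff_sum, coeff_sum]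
  refine Finset.sum_congr rfl fun m _ => ?_
  by_cases hmT : ∀ r ∈ m.support, r ∈ T
  · have : phi N T (monomial m (coeff m P)) = monomial m (coeff m P) := by
      rw [phi, aeval_monomial]
      have hprod : (m.prod fun r k => (if r ∈ T then X r else 0 :
          MvPolynomial (Fin N) ℤ) ^ k) = m.prod fun r k => (X r) ^ k :=
        Finsupp.prod_congr fun r hr => by rw [if_pos (hmT r hr)]
      rw [hprod, monomial_eq]
      rfl
    rw [this]
  · push_neg at hmT
    obtain ⟨r, hrm, hrT⟩ := hmT
    have h1 : phi N T (monomial m (coeff m P)) = 0 := by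
      rw [phi, aeval_monomial]
      have : (m.prod fun r k => (if r ∈ T then X r else 0 :
          MvPolynomial (Fin N) ℤ) ^ k) = 0 := by
        apply Finset.prod_eq_zero hrm
        simp only [if_neg hrT]
        exact zero_pow (Finsupp.mem_support_iff.1 hrm)
      rw [this, mul_zero]
    have h2 : coeff u (monomial m (coeff m P)) = 0 := by
      rw [coeff_monomial, if_neg]
      intro h
      exact Finsupp.mem_support_iff.1 hrm (by rw [h]; exact hu r hrT)
    rw [h1, h2, coeff_zero]

lemma phi_comp {T' T : Finset (Fin N)} (hTT : T' ⊆ T) (P : MvPolynomial (Fin N) ℤ) :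
    phi N T' (phi N T P) = phi N T' P := by
  classical
  have : (phi N T').comp (phi N T) = phi N T' := by
    apply MvPolynomial.algHom_ext
    intro r
    rw [AlgHom.comp_apply, phi_X]
    by_cases h : r ∈ T
    · rw [if_pos h]
    · rw [if_neg h, map_zero, phi_X, if_neg (fun hr => h (hTT hr))]
  calc phi N T' (phi N T P) = ((phi N T').comp (phi N T)) P := rfl
  _ = phi N T' P := by rw [this]

lemma key (p : ℕ) (hp : 1 ≤ p) (a : Fin N → (Fin n → ℤ)) (ha : Function.Injective a)
    (S : Finset (Fin N)) :
    coeff (∑ j ∈ S, Finsupp.single j (p - 1))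
      (Matrix.det (Matrix.of fun j i : {x // x ∈ S} =>
        phi N S (gammaPEntry n N p a (j : Fin N) (i : Fin N)))) = 1 := by
  classical
  induction S using Finset.strongInduction with
  | _ S ih =>
    rcases S.eq_empty_or_nonempty with rfl | hS
    · haveI : IsEmpty {x // x ∈ (∅ : Finset (Fin N))} :=
        ⟨fun x => (Finset.notMem_empty _ x.2)⟩
      rw [Matrix.det_isEmpty, Finset.sum_empty]
      simp
    · obtain ⟨i0, hi0, hmin⟩ := Finset.exists_min_image S (fun r => toLex (a r)) hS
      have hcol : ∀ j : {x // x ∈ S},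
          (Matrix.of fun j i : {x // x ∈ S} =>
            phi N S (gammaPEntry n N p a (j : Fin N) (i : Fin N))) j ⟨i0, hi0⟩
          = if j = ⟨i0, hi0⟩ then (X i0 : MvPolynomial (Fin N) ℤ) ^ (p - 1) else 0 := by
        intro j
        have hcl := column_lemma p hp ha hi0 hmin j.2
        rw [Matrix.of_apply, hcl]
        congr 1
        simp [Subtype.ext_iff]
      rw [det_column S i0 hi0 _ _ hcol]
      rw [← Finset.add_sum_erase S _ hi0]
      rw [X_pow_eq_monomial, coeff_monomial_mul, one_mul]
      have hu'supp : ∀ r, r ∉ S.erase i0 →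
          (∑ j ∈ S.erase i0, Finsupp.single j (p - 1)) r = 0 := by
        intro r hr
        rw [Finsupp.finset_sum_apply]
        apply Finset.sum_eq_zero
        intro j hj
        rw [Finsupp.single_apply, if_neg]
        intro h; subst h; exact hr hj
      rw [← coeff_phi (S.erase i0) _ hu'supp]
      rw [AlgHom.map_det]
      have hmx : ((phi N (S.erase i0)).mapMatrix
            (Matrix.of fun j i : {x // x ∈ S.erase i0} =>
              (Matrix.of fun j i : {x // x ∈ S} =>
                phi N S (gammaPEntry n N p a (j : Fin N) (i : Fin N)))
                ⟨j.1, Finset.mem_of_mem_erase j.2⟩ ⟨i.1, Finset.mem_of_mem_erase i.2⟩))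
          = Matrix.of fun j i : {x // x ∈ S.erase i0} =>
              phi N (S.erase i0) (gammaPEntry n N p a (j : Fin N) (i : Fin N)) := by
        ext j i
        simp only [AlgHom.mapMatrix_apply, Matrix.map_apply, Matrix.of_apply]
        rw [phi_comp (Finset.erase_subset _ _)]
      rw [hmx]
      exact ih _ (Finset.erase_ssubset hi0)

end GammaAux

open MvPolynomial in
/-- For every nonempty `J ⊆ {1,…,N}`, the coefficient of `∏_{j∈J} v_j^{p−1}` in
`det((γ_p)_{j,i})_{j,i∈J}` equals `1`; in particular this determinant, and the determinant
of the Hasse–Witt matrix congruent to it mod `p`, is not divisible by `p`. -/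
theorem gammaP_det_coeff_eq_one
    (p : ℕ) [Fact p.Prime] (n N : ℕ)
    (a : Fin N → (Fin n → ℤ)) (ha : Function.Injective a)
    (J : Finset (Fin N)) (hJ : J.Nonempty) :
    MvPolynomial.coeff (∑ j ∈ J, Finsupp.single j (p - 1))
        (Matrix.det (Matrix.of fun j i : J => gammaPEntry n N p a (j : Fin N) (i : Fin N))) = 1 ∧
      ¬ (p : MvPolynomial (Fin N) ℤ) ∣
        Matrix.det (Matrix.of fun j i : J => gammaPEntry n N p a (j : Fin N) (i : Fin N)) ∧
      ¬ (p : MvPolynomial (Fin N) ℤ) ∣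
        Matrix.det (Matrix.of fun j i : J =>
          ((genericF n N a) ^ (p - 1)).coeff ((p : ℤ) • a (i : Fin N) - a (j : Fin N))) := by
  classical
  have hp : p.Prime := Fact.out
  have hp1 : 1 ≤ p := hp.one_lt.le
  set Mγ : Matrix {x // x ∈ J} {x // x ∈ J} (MvPolynomial (Fin N) ℤ) :=
    Matrix.of fun j i : J => gammaPEntry n N p a (j : Fin N) (i : Fin N) with hMγ
  have husupp : ∀ r, r ∉ J → (∑ j ∈ J, Finsupp.single j (p - 1)) r = 0 := by
    intro r hr
    rw [Finsupp.finset_sum_apply]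
    exact Finset.sum_eq_zero fun j hj => by
      rw [Finsupp.single_apply, if_neg (fun (h : j = r) => hr (h ▸ hj))]
  have h1 : MvPolynomial.coeff (∑ j ∈ J, Finsupp.single j (p - 1)) Mγ.det = 1 := by
    rw [← GammaAux.coeff_phi J _ husupp, AlgHom.map_det]
    have hmx : (GammaAux.phi N J).mapMatrix Mγ
        = Matrix.of fun j i : J =>
            GammaAux.phi N J (gammaPEntry n N p a (j : Fin N) (i : Fin N)) := by
      ext j i
      simp only [AlgHom.mapMatrix_apply, Matrix.map_apply, Matrix.of_apply, hMγ]
    rw [hmx]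
    exact GammaAux.key p hp1 a ha J
  have h2 : ¬ (p : MvPolynomial (Fin N) ℤ) ∣ Mγ.det := by
    rintro ⟨q, hq⟩
    have hC : ((p : ℕ) : MvPolynomial (Fin N) ℤ) = MvPolynomial.C ((p : ℕ) : ℤ) := by
      simp
    have hco := congrArg (MvPolynomial.coeff (∑ j ∈ J, Finsupp.single j (p - 1))) hq
    rw [h1, hC, MvPolynomial.coeff_C_mul] at hco
    have hdvd : (p : ℤ) ∣ 1 := ⟨_, hco⟩
    have hle := Int.le_of_dvd one_pos hdvd
    have : (2 : ℤ) ≤ (p : ℤ) := by exact_mod_cast hp.two_le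
    omega
  refine ⟨h1, h2, ?_⟩
  intro hdvd
  apply h2
  set I : Ideal (MvPolynomial (Fin N) ℤ) :=
    Ideal.span {(p : MvPolynomial (Fin N) ℤ)} with hI
  set π := Ideal.Quotient.mk I with hπ
  obtain ⟨p', hp'⟩ : ∃ p', p = p' + 1 := ⟨p - 1, by omega⟩
  have hent : ∀ j i : {x // x ∈ J},
      π (gammaPEntry n N p a (j : Fin N) (i : Fin N))
      = π ((-1 : MvPolynomial (Fin N) ℤ) ^ (p + 1)) *
        π ((genericF n N a ^ (p - 1)).coeff ((p : ℤ) • a (i : Fin N) - a (j : Fin N))) := by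
    intro j i
    rw [gammaPEntry]
    rw [hp', Finset.sum_Icc_succ_top (by omega), map_add]
    have h0 : π (∑ k ∈ Finset.Icc 1 p', (-1 : MvPolynomial (Fin N) ℤ) ^ (k+1) *
        (Nat.choose (p'+1) k : MvPolynomial (Fin N) ℤ) * (X (i : Fin N)) ^ (p'+1-k) *
        ((genericF n N a) ^ (k-1)).coeff ((k : ℤ) • a (i : Fin N) - a (j : Fin N))) = 0 := by
      rw [map_sum]
      apply Finset.sum_eq_zero
      intro k hk
      rw [Finset.mem_Icc] at hk
      have hpk : p ∣ Nat.choose p k :=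
        hp.dvd_choose_self (by omega) (by omega)
      obtain ⟨c, hc⟩ := hpk
      have hcast : (Nat.choose (p'+1) k : MvPolynomial (Fin N) ℤ)
          = (p : MvPolynomial (Fin N) ℤ) * (c : MvPolynomial (Fin N) ℤ) := by
        rw [← hp', hc]
        push_cast
        ring
      rw [hπ, hI]
      apply (Ideal.Quotient.eq_zero_iff_dvd _ _).2
      rw [hcast]
      exact ⟨(c : MvPolynomial (Fin N) ℤ) * ((-1) ^ (k+1) * (X (i : Fin N)) ^ (p'+1-k) *
        ((genericF n N a) ^ (k-1)).coeff ((k : ℤ) • a (i : Fin N) - a (j : Fin N))), by ring⟩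
    rw [h0, zero_add]
    rw [Nat.choose_self, Nat.sub_self, Nat.cast_one, mul_one, pow_zero, mul_one,
      Nat.add_sub_cancel, map_mul]
  have hπdet : π Mγ.det = 0 := by
    rw [RingHom.map_det]
    have hmm : π.mapMatrix Mγ = (π ((-1 : MvPolynomial (Fin N) ℤ) ^ (p + 1))) •
        π.mapMatrix (Matrix.of fun j i : J =>
          ((genericF n N a) ^ (p - 1)).coeff ((p : ℤ) • a (i : Fin N) - a (j : Fin N))) := by
      ext j i
      simp only [RingHom.mapMatrix_apply, Matrix.map_apply, Matrix.smul_apply, Matrix.of_apply,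
        smul_eq_mul, hMγ]
      exact hent j i
    rw [hmm, Matrix.det_smul]
    have : (π.mapMatrix (Matrix.of fun j i : J =>
        ((genericF n N a) ^ (p - 1)).coeff ((p : ℤ) • a (i : Fin N) - a (j : Fin N)))).det
        = π (Matrix.det (Matrix.of fun j i : J =>
          ((genericF n N a) ^ (p - 1)).coeff ((p : ℤ) • a (i : Fin N) - a (j : Fin N)))) :=
      (RingHom.map_det _ _).symm
    rw [this, hπ, hI, (Ideal.Quotient.eq_zero_iff_dvd _ _).2 hdvd, mul_zero]
  rw [hπ, hI] at hπdet
  exact (Ideal.Quotient.eq_zero_iff_dvd _ _).1 hπdet
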